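/- For every n ≥ 8 there exists a sequence of n distinct real numbers in which every subsequence that is a rollercoaster has length at most ⌈n/2⌉ (so the bound ⌈n/2⌉ on the length of a longest rollercoaster is tight in the worst case). -/

import Mathlib

/-- `IsRun t i j` says that the contiguous block `t i, t (i+1), …, t j` is a
*run* of the finite sequence `t`: it is strictly increasing or strictly
decreasing, and it is maximal with this property among contiguous blocks. -/
def IsRun {m : ℕ} (t : Fin m → ℝ) (i j : Fin m) : Prop :=
  i ≤ j ∧
  (StrictMonoOn t (Set.Icc i j) ∨ StrictAntiOn t (Set.Icc i j)) ∧
  ∀ i' j' : Fin m, i' ≤ i → j ≤ j' → (i ≠ i' ∨ j ≠ j') →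
    ¬ (StrictMonoOn t (Set.Icc i' j') ∨ StrictAntiOn t (Set.Icc i' j'))

/-- A *rollercoaster* is a finite sequence of distinct real numbers with at
least three terms in which every run has length (`j - i + 1`) at least 3. -/
def IsRollercoaster {m : ℕ} (t : Fin m → ℝ) : Prop :=
  3 ≤ m ∧ Function.Injective t ∧
  ∀ i j : Fin m, IsRun t i j → (i : ℕ) + 2 ≤ (j : ℕ)

/-- The value sequence: blocks of four `(i+2, i+3, i, i+1)`, with a rotated tail. -/
def pv (n i : ℕ) : ℕ :=
  if i < 4 * (n / 4) then (if i % 4 < 2 then i + 2 else i - 2)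
  else if i + 1 = n then 4 * (n / 4) else i + 1

/-- A coloring with fewer than `(n+1)/2` colors such that equal colors force an inversion. -/
def cv (n i : ℕ) : ℕ :=
  if i < 4 * (n / 4) then 2 * (i / 4) + i % 2
  else if i + 1 = n then 2 * (n / 4) else 2 * (n / 4) + (i - 4 * (n / 4))

lemma pv_inj {n i j : ℕ} (hi : i < n) (hj : j < n) (h : pv n i = pv n j) : i = j := by
  unfold pv at h; split_ifs at h <;> omega

lemma pv_inv {n i j : ℕ} (hij : i < j) (hj : j < n) (h : pv n j < pv n i) :
    pv n j < j ∧ i < pv n i := by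
  unfold pv at h ⊢; split_ifs at h ⊢ <;> omega

lemma cv_lt {n i : ℕ} (hi : i < n) : cv n i < (n + 1) / 2 := by
  unfold cv; split_ifs <;> omega

lemma cv_eq {n i j : ℕ} (hij : i < j) (hj : j < n) (h : cv n i = cv n j) :
    pv n j < pv n i := by
  unfold pv cv at *; split_ifs at h ⊢ <;> omega

/-- For every `n ≥ 8` there is a sequence of `n` distinct real numbers in
which every rollercoaster subsequence has length at most `⌈n/2⌉`. -/
theorem statement1 (n : ℕ) (hn : 8 ≤ n) :
    ∃ s : Fin n → ℝ, Function.Injective s ∧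
      ∀ (m : ℕ) (f : Fin m → Fin n), StrictMono f →
        IsRollercoaster (s ∘ f) → m ≤ (n + 1) / 2 := by
  refine ⟨fun i => (pv n i : ℝ), ?_, ?_⟩
  · intro a b hab
    exact Fin.ext (pv_inj a.isLt b.isLt (Nat.cast_injective hab))
  · rintro m f hf ⟨hm3, htinj, hruns⟩
    obtain ⟨m', rfl⟩ : ∃ m', m = m' + 1 := ⟨m - 1, by omega⟩
    set t : Fin (m' + 1) → ℝ := (fun i : Fin n => ((pv n (i : ℕ) : ℕ) : ℝ)) ∘ f with ht
    have htinj : Function.Injective t := htinj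
    have hruns : ∀ i j : Fin (m' + 1), IsRun t i j → (i : ℕ) + 2 ≤ (j : ℕ) := hruns
    have tval : ∀ a : Fin (m' + 1), t a = ((pv n (f a) : ℕ) : ℝ) := fun a => rfl
    have hmono : StrictMono t := by
      by_contra hns
      rw [Fin.strictMono_iff_lt_succ] at hns
      push_neg at hns
      obtain ⟨i, hi⟩ := hns
      have hne : t i.succ ≠ t i.castSucc := by
        intro h
        have := htinj h
        have h1 : ((i.succ : Fin (m'+1)) : ℕ) = ((i.castSucc : Fin (m'+1)) : ℕ) := by rw [this]
        simp at h1
      have hdesc : t i.succ < t i.castSucc := lt_of_le_of_ne hi hne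
      set k : Fin (m' + 1) := i.castSucc with hk
      set k' : Fin (m' + 1) := i.succ with hk'
      have hkk' : k < k' := (Fin.castSucc_lt_succ : i.castSucc < i.succ)
      have hpair : StrictAntiOn t (Set.Icc k k') := by
        intro x hx y hy hxy
        have hx1 := hx.1; have hx2 := hx.2; have hy1 := hy.1; have hy2 := hy.2
        rw [Fin.le_def] at hx1 hx2 hy1 hy2
        rw [Fin.lt_def] at hxy
        have hxk : x = k := by
          apply Fin.ext
          simp only [hk, hk', Fin.coe_castSucc, Fin.val_succ] at hx1 hx2 hy1 hy2 hxy ⊢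
          omega
        have hyk : y = k' := by
          apply Fin.ext
          simp only [hk, hk', Fin.coe_castSucc, Fin.val_succ] at hx1 hx2 hy1 hy2 hxy ⊢
          omega
        rw [hxk, hyk]; exact hdesc
      set A : Set (Fin (m' + 1)) := {x | x ≤ k ∧ StrictAntiOn t (Set.Icc x k')} with hA
      obtain ⟨i₀, hi₀A, hi₀min⟩ := Set.exists_min_image A id (Set.toFinite A) ⟨k, le_refl k, hpair⟩
      set B : Set (Fin (m' + 1)) := {y | k' ≤ y ∧ StrictAntiOn t (Set.Icc i₀ y)} with hB
      obtain ⟨j₀, hj₀B, hj₀max⟩ := Set.exists_max_image B id (Set.toFinite B) ⟨k', le_refl k', hi₀A.2⟩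
      have hik : i₀ ≤ k := hi₀A.1
      have hkj : k' ≤ j₀ := hj₀B.1
      have hrun : IsRun t i₀ j₀ := by
        refine ⟨hik.trans (hkk'.le.trans hkj), Or.inr hj₀B.2, ?_⟩
        intro i' j' hi' hj' hne' hcon
        have hkm : k ∈ Set.Icc i' j' := ⟨hi'.trans hik, hkk'.le.trans (hkj.trans hj')⟩
        have hk'm : k' ∈ Set.Icc i' j' := ⟨hi'.trans (hik.trans hkk'.le), hkj.trans hj'⟩
        rcases hcon with hmo | han
        · exact absurd (hmo hkm hk'm hkk') (not_lt.mpr hdesc.le)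
        · rcases hne' with hne' | hne'
          · have hlt : i' < i₀ := lt_of_le_of_ne hi' (Ne.symm hne')
            have hmem : i' ∈ A :=
              ⟨hlt.le.trans hik, han.mono (Set.Icc_subset_Icc le_rfl (hkj.trans hj'))⟩
            exact absurd (hi₀min i' hmem) (not_le.mpr hlt)
          · have hlt : j₀ < j' := lt_of_le_of_ne hj' hne'
            have hmem : j' ∈ B :=
              ⟨hkj.trans hlt.le, han.mono (Set.Icc_subset_Icc hi' le_rfl)⟩
            exact absurd (hj₀max j' hmem) (not_le.mpr hlt)
      have hlen := hruns i₀ j₀ hrun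
      have hi₀j₀ : (i₀ : ℕ) + 1 < m' + 1 := by have := j₀.isLt; omega
      set i₁ : Fin (m' + 1) := ⟨(i₀ : ℕ) + 1, hi₀j₀⟩ with hi₁
      have hm1 : i₁ ∈ Set.Icc i₀ j₀ := by
        constructor <;> rw [Fin.le_def] <;> simp [hi₁] <;> omega
      have hm0 : i₀ ∈ Set.Icc i₀ j₀ := ⟨le_refl _, hik.trans (hkk'.le.trans hkj)⟩
      have hm2 : j₀ ∈ Set.Icc i₀ j₀ := ⟨hik.trans (hkk'.le.trans hkj), le_refl _⟩
      have h01 : i₀ < i₁ := by rw [Fin.lt_def]; simp [hi₁]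
      have h12 : i₁ < j₀ := by rw [Fin.lt_def]; simp [hi₁]; omega
      have ha1 : t i₁ < t i₀ := hj₀B.2 hm0 hm1 h01
      have ha2 : t j₀ < t i₁ := hj₀B.2 hm1 hm2 h12
      rw [tval, tval] at ha1 ha2
      have hp1 : pv n (f i₁) < pv n (f i₀) := by exact_mod_cast ha1
      have hp2 : pv n (f j₀) < pv n (f i₁) := by exact_mod_cast ha2
      have hf01 : (f i₀ : ℕ) < (f i₁ : ℕ) := hf h01
      have hf12 : (f i₁ : ℕ) < (f j₀ : ℕ) := hf h12
      have q1 := pv_inv hf01 (f i₁).isLt hp1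
      have q2 := pv_inv hf12 (f j₀).isLt hp2
      omega
    have hinj2 : Function.Injective
        (fun a : Fin (m' + 1) => (⟨cv n (f a), cv_lt (f a).isLt⟩ : Fin ((n + 1) / 2))) := by
      intro a b hab
      simp only [Fin.mk.injEq] at hab
      by_contra hne
      rcases Ne.lt_or_gt hne with h | h
      · have hcv := cv_eq (show ((f a : ℕ)) < (f b : ℕ) from hf h) (f b).isLt hab
        have hlt : t a < t b := hmono h
        rw [tval, tval] at hlt
        have hplt : pv n (f a) < pv n (f b) := by exact_mod_cast hlt
        omega
      · have hcv := cv_eq (show ((f b : ℕ)) < (f a : ℕ) from hf h) (f a).isLt hab.symm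
        have hlt : t b < t a := hmono h
        rw [tval, tval] at hlt
        have hplt : pv n (f b) < pv n (f a) := by exact_mod_cast hlt
        omega
    simpa using Fintype.card_le_of_injective _ hinj2
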